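/- Let κ : ℝ³ → ℝ be measurable with 0 ≤ κ(x) ≤ K_κ for all x. Let f : ℝ³×ℝ³ → [0,∞) be measurable with ∫_{ℝ⁶} f dx dv = ρ₀ > 0, ∫_{ℝ⁶} f |log f| dx dv ≤ h̄ < ∞, and ∫_{ℝ⁶} ⟨y⟩^{m} f(y,v) dy dv ≤ K < ∞ for some m > 3. Define H(x,v) := ∫_{ℝ³} κ(x−y) f(y,v) dy. Then there exists a constant C_H > 0, depending only on K_κ, ρ₀, h̄, m and K, such that ∫_{ℝ³} H(x,v) log H(x,v) dv ≤ C_H for every x ∈ ℝ³. -/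
import Mathlib


open MeasureTheory Real

noncomputable section

abbrev E3 : Type := EuclideanSpace ℝ (Fin 3)

/-- `⟨x⟩ = √(1+|x|²)`. -/
def jap (x : E3) : ℝ := Real.sqrt (1 + ‖x‖ ^ 2)

lemma young_aux (u s : ℝ) (hu : 0 ≤ u) : u * s ≤ u * Real.log u + Real.exp (s - 1) := by
  rcases eq_or_lt_of_le hu with h | h
  · simp [← h]; positivity
  · have h1 : s - Real.log u ≤ Real.exp (s - Real.log u - 1) := by
      have := Real.add_one_le_exp (s - Real.log u - 1); linarith
    have h2 : u * (s - Real.log u) ≤ u * Real.exp (s - Real.log u - 1) :=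
      mul_le_mul_of_nonneg_left h1 hu
    have h3 : u * Real.exp (s - Real.log u - 1) = Real.exp (s - 1) := by
      rw [show s - Real.log u - 1 = (s - 1) + (- Real.log u) by ring, Real.exp_add,
        Real.exp_neg, Real.exp_log h]
      field_simp
    nlinarith [h2, h3]

lemma mul_log_le_max (F G : ℝ) (hF : 0 ≤ F) (hFG : F ≤ G) :
    F * Real.log F ≤ max 0 (G * Real.log G) := by
  rcases le_or_gt F 1 with h | h
  · refine le_trans ?_ (le_max_left _ _)
    rcases eq_or_lt_of_le hF with h0 | h0
    · simp [← h0]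
    · exact mul_nonpos_of_nonneg_of_nonpos hF (Real.log_nonpos h0.le h)
  · refine le_trans ?_ (le_max_right _ _)
    have hlF : 0 ≤ Real.log F := Real.log_nonneg h.le
    have hG : 1 < G := lt_of_lt_of_le h hFG
    calc F * Real.log F ≤ G * Real.log F := mul_le_mul_of_nonneg_right hFG hlF
      _ ≤ G * Real.log G := mul_le_mul_of_nonneg_left
          (Real.log_le_log (by linarith) hFG) (by linarith)

lemma max_mul_log_le (c t : ℝ) (hc : 0 ≤ c) (ht : 0 ≤ t) :
    max 0 ((c * t) * Real.log (c * t)) ≤ c * (|Real.log c| * t + t * |Real.log t|) := by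
  have hrhs : 0 ≤ c * (|Real.log c| * t + t * |Real.log t|) := by positivity
  rcases eq_or_lt_of_le hc with h0 | h0
  · simp [← h0]
  rcases eq_or_lt_of_le ht with h1 | h1
  · simp [← h1]
  refine max_le hrhs ?_
  rw [Real.log_mul (ne_of_gt h0) (ne_of_gt h1)]
  have h2 : Real.log c + Real.log t ≤ |Real.log c| + |Real.log t| := by
    have := le_abs_self (Real.log c); have := le_abs_self (Real.log t); linarith
  have := mul_le_mul_of_nonneg_left h2 (by positivity : (0:ℝ) ≤ c * t)
  nlinarith

lemma one_le_jap (y : E3) : 1 ≤ jap y := by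
  rw [jap]
  have h : (1:ℝ) ≤ 1 + ‖y‖ ^ 2 := le_add_of_nonneg_right (sq_nonneg _)
  nlinarith [Real.sq_sqrt (by linarith : (0:ℝ) ≤ 1 + ‖y‖ ^ 2), Real.sqrt_nonneg (1 + ‖y‖ ^ 2)]

lemma jap_pos (y : E3) : 0 < jap y := lt_of_lt_of_le one_pos (one_le_jap y)

lemma jap_rpow_neg (m : ℝ) (y : E3) :
    jap y ^ (-m) = ((1:ℝ) + ‖y‖ ^ 2) ^ (-m / 2) := by
  rw [jap, Real.sqrt_eq_rpow, ← Real.rpow_natCast ‖y‖ 2, ← Real.rpow_mul (by positivity)]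
  rw [show -m / 2 = 1/2 * -m by ring]

lemma log_jap_le_rpow (m : ℝ) (hm : 1 ≤ m) (y : E3) : Real.log (jap y) ≤ jap y ^ m := by
  have h1 := Real.log_le_sub_one_of_pos (jap_pos y)
  have h2 : jap y ≤ jap y ^ m := by
    nth_rewrite 1 [show jap y = jap y ^ (1:ℝ) by rw [Real.rpow_one]]
    exact Real.rpow_le_rpow_of_exponent_le (one_le_jap y) hm
  linarith

lemma finrank_E3 : ((Module.finrank ℝ E3 : ℝ)) = 3 := by
  simp [finrank_euclideanSpace]

lemma keybound (Kκ m : ℝ) (hK : 0 ≤ Kκ) (hm : 3 < m) (κx g : E3 → ℝ)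
    (hκx_meas : Measurable κx) (hκx : ∀ y, 0 ≤ κx y ∧ κx y ≤ Kκ)
    (hg_meas : Measurable g) (hg0 : ∀ y, 0 ≤ g y)
    (hg_int : Integrable g)
    (hge_int : Integrable (fun y => g y * |Real.log (g y)|))
    (hgm_int : Integrable (fun y => jap y ^ m * g y)) :
    (∫ y, κx y * g y) * Real.log (∫ y, κx y * g y) ≤
      Kκ * ((|Real.log Kκ| + Real.exp (-1) * (∫ y : E3, ((1:ℝ) + ‖y‖ ^ 2) ^ (-m / 2))) *
        (∫ y, g y) + (∫ y, g y * |Real.log (g y)|) + m * ∫ y, jap y ^ m * g y) := by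
  set cI : ℝ := ∫ y : E3, ((1:ℝ) + ‖y‖ ^ 2) ^ (-m / 2) with hcI
  have hcI0 : 0 ≤ cI := integral_nonneg fun y => Real.rpow_nonneg (by positivity) _
  have hgauss_int : Integrable (fun y : E3 => ((1:ℝ) + ‖y‖ ^ 2) ^ (-m / 2)) :=
    integrable_rpow_neg_one_add_norm_sq (by rw [finrank_E3]; exact hm)
  set F : E3 → ℝ := fun y => κx y * g y with hF
  have hF0 : ∀ y, 0 ≤ F y := fun y => mul_nonneg (hκx y).1 (hg0 y)
  have hFle : ∀ y, F y ≤ Kκ * g y := fun y =>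
    mul_le_mul_of_nonneg_right (hκx y).2 (hg0 y)
  have hKg_int : Integrable (fun y => Kκ * g y) := hg_int.const_mul Kκ
  have hF_int : Integrable F := by
    refine hKg_int.mono' ((hκx_meas.mul hg_meas).aestronglyMeasurable) ?_
    filter_upwards with y
    rw [Real.norm_eq_abs, abs_of_nonneg (hF0 y)]; exact hFle y
  set a : ℝ := ∫ y, F y with ha
  have ha0 : 0 ≤ a := integral_nonneg hF0
  have hG0 : 0 ≤ ∫ y, g y := integral_nonneg hg0
  have hG1 : 0 ≤ ∫ y, g y * |Real.log (g y)| :=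
    integral_nonneg fun y => mul_nonneg (hg0 y) (abs_nonneg _)
  have hG2 : 0 ≤ ∫ y, jap y ^ m * g y :=
    integral_nonneg fun y => mul_nonneg (Real.rpow_nonneg (Real.sqrt_nonneg _) _) (hg0 y)
  have haG : a ≤ Kκ * ∫ y, g y := by
    rw [← integral_const_mul]
    exact integral_mono hF_int hKg_int hFle
  rcases eq_or_lt_of_le ha0 with h0 | h0
  · rw [← h0, zero_mul]
    have h5 : 0 ≤ |Real.log Kκ| + Real.exp (-1) * cI := by positivity
    exact mul_nonneg hK (add_nonneg (add_nonneg (mul_nonneg h5 hG0) hG1)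
      (mul_nonneg (by linarith) hG2))
  -- main case a > 0
  have key : ∀ y, F y * Real.log a ≤
      (Kκ * (|Real.log Kκ| * g y + g y * |Real.log (g y)|) +
        a * Real.exp (-1) * ((1:ℝ) + ‖y‖ ^ 2) ^ (-m / 2)) +
        m * Kκ * (jap y ^ m * g y) := by
    intro y
    have h1 := young_aux (F y) (Real.log a - m * Real.log (jap y)) (hF0 y)
    have h2 : F y * Real.log (F y) ≤ Kκ * (|Real.log Kκ| * g y + g y * |Real.log (g y)|) :=
      (mul_log_le_max (F y) (Kκ * g y) (hF0 y) (hFle y)).trans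
        (max_mul_log_le Kκ (g y) hK (hg0 y))
    have h3 : Real.exp (Real.log a - m * Real.log (jap y) - 1) =
        a * Real.exp (-1) * ((1:ℝ) + ‖y‖ ^ 2) ^ (-m / 2) := by
      rw [show Real.log a - m * Real.log (jap y) - 1 =
        Real.log a + (Real.log (jap y) * (-m)) + (-1) by ring, Real.exp_add, Real.exp_add,
        Real.exp_log h0, ← Real.rpow_def_of_pos (jap_pos y), jap_rpow_neg m y]
      ring
    have h4 : F y * (m * Real.log (jap y)) ≤ m * Kκ * (jap y ^ m * g y) := by
      have hl0 : 0 ≤ Real.log (jap y) := Real.log_nonneg (one_le_jap y)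
      have := mul_le_mul (hFle y) (mul_le_mul_of_nonneg_left (log_jap_le_rpow m (by linarith) y)
        (by linarith : (0:ℝ) ≤ m)) (mul_nonneg (by linarith) hl0) (mul_nonneg hK (hg0 y))
      nlinarith
    nlinarith [h1, h2, h3, h4]
  have hRHS_int : Integrable (fun y =>
      (Kκ * (|Real.log Kκ| * g y + g y * |Real.log (g y)|) +
        a * Real.exp (-1) * ((1:ℝ) + ‖y‖ ^ 2) ^ (-m / 2)) +
        m * Kκ * (jap y ^ m * g y)) := by
    exact ((((hg_int.const_mul _).add hge_int).const_mul Kκ).add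
      (hgauss_int.const_mul _)).add (hgm_int.const_mul _)
  have hLHS_int : Integrable (fun y => F y * Real.log a) := hF_int.mul_const _
  have hmono := integral_mono hLHS_int hRHS_int key
  rw [integral_mul_const] at hmono
  have hI1 : Integrable (fun y => Kκ * (|Real.log Kκ| * g y + g y * |Real.log (g y)|)) :=
    ((hg_int.const_mul _).add hge_int).const_mul Kκ
  have hI2 : Integrable (fun y : E3 => a * Real.exp (-1) * ((1:ℝ) + ‖y‖ ^ 2) ^ (-m / 2)) :=
    hgauss_int.const_mul _
  have hI3 : Integrable (fun y => m * Kκ * (jap y ^ m * g y)) := hgm_int.const_mul _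
  have hI12 : Integrable (fun y : E3 => Kκ * (|Real.log Kκ| * g y + g y * |Real.log (g y)|) +
      a * Real.exp (-1) * ((1:ℝ) + ‖y‖ ^ 2) ^ (-m / 2)) := hI1.add hI2
  rw [integral_add hI12 hI3, integral_add hI1 hI2, integral_const_mul,
    integral_const_mul, integral_const_mul,
    integral_add (hg_int.const_mul _) hge_int, integral_const_mul] at hmono
  have hstep : a * (Real.exp (-1) * cI) ≤ (Kκ * ∫ y, g y) * (Real.exp (-1) * cI) :=
    mul_le_mul_of_nonneg_right haG (mul_nonneg (Real.exp_nonneg _) hcI0)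
  nlinarith [hmono, hstep]

/-- Entropy bound `∫ H log H dv ≤ C_H`, uniformly in `x`, for
`H(x,v) = ∫ κ(x-y) f(y,v) dy` with `0 ≤ κ ≤ K_κ` (note `Real.log 0 = 0`, matching the
convention `0·log 0 = 0`). -/
theorem statement4 (Kκ ρ₀ hbar m K : ℝ) (hm : 3 < m)
    (κ : E3 → ℝ) (hκ_meas : Measurable κ) (hκ : ∀ x : E3, 0 ≤ κ x ∧ κ x ≤ Kκ)
    (f : E3 × E3 → ℝ) (hf_meas : Measurable f) (hf_nonneg : ∀ p, 0 ≤ f p)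
    (hf_int : Integrable f) (hmass : ∫ p, f p = ρ₀) (hρ : 0 < ρ₀)
    (hent_int : Integrable (fun p : E3 × E3 => f p * |Real.log (f p)|))
    (hent : ∫ p : E3 × E3, f p * |Real.log (f p)| ≤ hbar)
    (hmom_int : Integrable (fun p : E3 × E3 => jap p.1 ^ m * f p))
    (hmom : ∫ p : E3 × E3, jap p.1 ^ m * f p ≤ K) :
    ∃ CH : ℝ, 0 < CH ∧ ∀ x : E3,
      (∫ v : E3, (∫ y : E3, κ (x - y) * f (y, v)) *
          Real.log (∫ y : E3, κ (x - y) * f (y, v))) ≤ CH := by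
  have hK0 : 0 ≤ Kκ := le_trans (hκ 0).1 (hκ 0).2
  -- product measure facts
  have hf_int' : Integrable f ((volume : Measure E3).prod volume) := hf_int
  have hent_int' : Integrable (fun p : E3 × E3 => f p * |Real.log (f p)|)
      ((volume : Measure E3).prod volume) := hent_int
  have hmom_int' : Integrable (fun p : E3 × E3 => jap p.1 ^ m * f p)
      ((volume : Measure E3).prod volume) := hmom_int
  set cI : ℝ := ∫ y : E3, ((1:ℝ) + ‖y‖ ^ 2) ^ (-m / 2) with hcI
  have hcI0 : 0 ≤ cI := integral_nonneg fun y => Real.rpow_nonneg (by positivity) _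
  set c₁ : ℝ := |Real.log Kκ| + Real.exp (-1) * cI with hc₁
  have hc₁0 : 0 ≤ c₁ := by positivity
  -- the marginals
  have hG0_int : Integrable (fun v : E3 => ∫ y, f (y, v)) := hf_int'.integral_prod_right
  have hG1_int : Integrable (fun v : E3 => ∫ y, f (y, v) * |Real.log (f (y, v))|) :=
    hent_int'.integral_prod_right
  have hG2_int : Integrable (fun v : E3 => ∫ y, jap y ^ m * f (y, v)) :=
    hmom_int'.integral_prod_right
  have hiG0 : (∫ v : E3, ∫ y, f (y, v)) = ρ₀ := by
    rw [← hmass, show (∫ p : E3 × E3, f p) = ∫ p, f p ∂(volume : Measure E3).prod volume from rfl,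
      integral_prod_symm f hf_int']
  have hiG1 : (∫ v : E3, ∫ y, f (y, v) * |Real.log (f (y, v))|) ≤ hbar := by
    rw [show (∫ v : E3, ∫ y, f (y, v) * |Real.log (f (y, v))|) =
      ∫ p, (fun p : E3 × E3 => f p * |Real.log (f p)|) p ∂(volume : Measure E3).prod volume from
      (integral_prod_symm _ hent_int').symm]
    exact hent
  have hiG2 : (∫ v : E3, ∫ y, jap y ^ m * f (y, v)) ≤ K := by
    rw [show (∫ v : E3, ∫ y, jap y ^ m * f (y, v)) =
      ∫ p, (fun p : E3 × E3 => jap p.1 ^ m * f p) p ∂(volume : Measure E3).prod volume from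
      (integral_prod_symm _ hmom_int').symm]
    exact hmom
  have hG1nn : 0 ≤ ∫ v : E3, ∫ y, f (y, v) * |Real.log (f (y, v))| :=
    integral_nonneg fun v => integral_nonneg fun y => mul_nonneg (hf_nonneg _) (abs_nonneg _)
  have hG2nn : 0 ≤ ∫ v : E3, ∫ y, jap y ^ m * f (y, v) :=
    integral_nonneg fun v => integral_nonneg fun y =>
      mul_nonneg (Real.rpow_nonneg (Real.sqrt_nonneg _) _) (hf_nonneg _)
  have hbar0 : 0 ≤ hbar := le_trans hG1nn hiG1
  have hK0' : 0 ≤ K := le_trans hG2nn hiG2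
  -- the dominating function
  set ψ : E3 → ℝ := fun v => Kκ * (c₁ * (∫ y, f (y, v)) +
      (∫ y, f (y, v) * |Real.log (f (y, v))|) + m * ∫ y, jap y ^ m * f (y, v)) with hψ
  have hψ_int : Integrable ψ :=
    (((hG0_int.const_mul c₁).add hG1_int).add (hG2_int.const_mul m)).const_mul Kκ
  have hψnn : ∀ v, 0 ≤ ψ v := by
    intro v
    refine mul_nonneg hK0 (add_nonneg (add_nonneg (mul_nonneg hc₁0 ?_) ?_)
      (mul_nonneg (by linarith) ?_))
    · exact integral_nonneg fun y => hf_nonneg _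
    · exact integral_nonneg fun y => mul_nonneg (hf_nonneg _) (abs_nonneg _)
    · exact integral_nonneg fun y =>
        mul_nonneg (Real.rpow_nonneg (Real.sqrt_nonneg _) _) (hf_nonneg _)
  have hψint_le : (∫ v, ψ v) ≤ Kκ * (c₁ * ρ₀ + hbar + m * K) := by
    rw [hψ]
    have hA : Integrable (fun v : E3 => c₁ * ∫ y, f (y, v)) := hG0_int.const_mul c₁
    have hB : Integrable (fun v : E3 =>
        (c₁ * ∫ y, f (y, v)) + ∫ y, f (y, v) * |Real.log (f (y, v))|) := hA.add hG1_int
    have hC : Integrable (fun v : E3 => m * ∫ y, jap y ^ m * f (y, v)) := hG2_int.const_mul m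
    rw [integral_const_mul, integral_add hB hC, integral_add hA hG1_int,
      integral_const_mul, integral_const_mul, hiG0]
    have hm0 : (0:ℝ) ≤ m := by linarith
    nlinarith [mul_le_mul_of_nonneg_left hiG1 hK0, mul_le_mul_of_nonneg_left
      (mul_le_mul_of_nonneg_left hiG2 hm0) hK0]
  refine ⟨Kκ * (c₁ * ρ₀ + hbar + m * K) + 1, ?_, ?_⟩
  · have : 0 ≤ Kκ * (c₁ * ρ₀ + hbar + m * K) :=
      mul_nonneg hK0 (add_nonneg (add_nonneg (mul_nonneg hc₁0 hρ.le) hbar0)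
        (mul_nonneg (by linarith) hK0'))
    linarith
  intro x
  by_cases hInt : Integrable (fun v : E3 => (∫ y : E3, κ (x - y) * f (y, v)) *
      Real.log (∫ y : E3, κ (x - y) * f (y, v)))
  · have hae0 : ∀ᵐ v : E3, Integrable (fun y => f (y, v)) := hf_int'.prod_left_ae
    have hae1 : ∀ᵐ v : E3, Integrable (fun y => f (y, v) * |Real.log (f (y, v))|) :=
      hent_int'.prod_left_ae
    have hae2 : ∀ᵐ v : E3, Integrable (fun y => jap y ^ m * f (y, v)) :=
      hmom_int'.prod_left_ae
    have hle : (∫ v : E3, (∫ y : E3, κ (x - y) * f (y, v)) *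
        Real.log (∫ y : E3, κ (x - y) * f (y, v))) ≤ ∫ v, ψ v := by
      refine integral_mono_ae hInt hψ_int ?_
      filter_upwards [hae0, hae1, hae2] with v h0 h1 h2
      have := keybound Kκ m hK0 hm (fun y => κ (x - y)) (fun y => f (y, v))
        (hκ_meas.comp (measurable_const.sub measurable_id))
        (fun y => hκ (x - y))
        (hf_meas.comp (measurable_id.prodMk measurable_const))
        (fun y => hf_nonneg _) h0 h1 h2
      exact this
    calc (∫ v : E3, (∫ y : E3, κ (x - y) * f (y, v)) *
        Real.log (∫ y : E3, κ (x - y) * f (y, v))) ≤ ∫ v, ψ v := hle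
      _ ≤ Kκ * (c₁ * ρ₀ + hbar + m * K) := hψint_le
      _ ≤ Kκ * (c₁ * ρ₀ + hbar + m * K) + 1 := by linarith
  · rw [integral_undef hInt]
    have : 0 ≤ Kκ * (c₁ * ρ₀ + hbar + m * K) :=
      mul_nonneg hK0 (add_nonneg (add_nonneg (mul_nonneg hc₁0 hρ.le) hbar0)
        (mul_nonneg (by linarith) hK0'))
    linarith

end
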